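/- There exists a Gδ set C ⊆ ℝ × ℝ such that, letting π : ℝ × ℝ → ℝ be the indicator function of C (a bounded Borel function of Baire class two), the best response relation E^π = {(s,μ) ∈ ℝ × Δ(ℝ) : ∫ π(s,y) dμ(y) ≥ ∫ π(t,y) dμ(y) for all t ∈ ℝ} is not a Borel subset of ℝ × Δ(ℝ). -/

import Mathlib

open MeasureTheory

namespace Stmt14

open Set Function Filter Topology

abbrev K := ℕ → Bool
abbrev NN := ℕ → ℕ

/-! ### Unary coding of Baire space inside Cantor space -/

noncomputable def pos (b : K) (k : ℕ) : ℕ := Nat.nth (fun n => b n = true) k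

noncomputable def dec (b : K) : ℕ → ℕ
  | 0 => pos b 0
  | k+1 => pos b (k+1) - pos b k - 1

def I : Set K := {b | {n | b n = true}.Infinite}

def tpos (β : NN) (k : ℕ) : ℕ := (Finset.range (k+1)).sum β + k

lemma tpos_succ (β : NN) (k : ℕ) : tpos β (k+1) = tpos β k + β (k+1) + 1 := by
  simp [tpos, Finset.sum_range_succ]; ring

lemma tpos_strictMono (β : NN) : StrictMono (tpos β) :=
  strictMono_nat_of_lt_succ fun k => by rw [tpos_succ]; omega

open Classical in
noncomputable def enc (β : NN) : K := fun n => decide (∃ k, tpos β k = n)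

lemma enc_eq_true_iff (β : NN) (n : ℕ) : enc β n = true ↔ ∃ k, tpos β k = n := by
  simp only [enc, decide_eq_true_eq]

lemma setOf_enc (β : NN) : {n | enc β n = true} = Set.range (tpos β) := by
  ext n
  simp [enc_eq_true_iff, Set.mem_range]

lemma enc_mem_I (β : NN) : enc β ∈ I := by
  rw [I, mem_setOf_eq, setOf_enc]
  exact infinite_range_of_injective (tpos_strictMono β).injective

lemma count_congr {p q : ℕ → Prop} [DecidablePred p] [DecidablePred q] {n : ℕ}
    (h : ∀ i < n, (p i ↔ q i)) : Nat.count p n = Nat.count q n := by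
  induction n with
  | zero => simp
  | succ n ih =>
      rw [Nat.count_succ, Nat.count_succ, ih (fun i hi => h i (by omega))]
      by_cases hp : p n
      · rw [if_pos hp, if_pos ((h n (by omega)).1 hp)]
      · rw [if_neg hp, if_neg (fun hq => hp ((h n (by omega)).2 hq))]

lemma count_eq_of_no {p : ℕ → Prop} [DecidablePred p] {a b : ℕ} (hab : a ≤ b)
    (h : ∀ i, a ≤ i → i < b → ¬ p i) : Nat.count p b = Nat.count p a := by
  induction b, hab using Nat.le_induction with
  | base => rfl
  | succ b hab ih =>
      rw [Nat.count_succ, if_neg (h b hab (by omega)), ih (fun i hi hib => h i hi (by omega))]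
      simp

lemma count_enc (β : NN) (k : ℕ) :
    Nat.count (fun n => enc β n = true) (tpos β k) = k := by
  induction k with
  | zero =>
      have h0 : Nat.count (fun n => enc β n = true) (tpos β 0) =
          Nat.count (fun n => enc β n = true) 0 := by
        refine count_eq_of_no (Nat.zero_le _) (fun i _ hi hip => ?_)
        obtain ⟨j, hj⟩ := (enc_eq_true_iff β i).1 hip
        have : tpos β 0 ≤ tpos β j := (tpos_strictMono β).monotone (Nat.zero_le j)
        omega
      simpa using h0
  | succ k ih =>
      have h1 : Nat.count (fun n => enc β n = true) (tpos β (k+1)) =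
          Nat.count (fun n => enc β n = true) (tpos β k + 1) := by
        refine count_eq_of_no ?_ (fun i hi hik hip => ?_)
        · have := tpos_strictMono β (show k < k + 1 by omega); omega
        · obtain ⟨j, hj⟩ := (enc_eq_true_iff β i).1 hip
          rcases lt_or_ge j (k+1) with hjk | hjk
          · have : tpos β j ≤ tpos β k := (tpos_strictMono β).monotone (by omega)
            omega
          · have : tpos β (k+1) ≤ tpos β j := (tpos_strictMono β).monotone hjk
            omega
      rw [h1, Nat.count_succ, if_pos ((enc_eq_true_iff β _).2 ⟨k, rfl⟩), ih]

lemma pos_enc (β : NN) (k : ℕ) : pos (enc β) k = tpos β k := by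
  have hp : enc β (tpos β k) = true := (enc_eq_true_iff β _).2 ⟨k, rfl⟩
  have := Nat.nth_count (p := fun n => enc β n = true) hp
  rw [count_enc] at this
  exact this

lemma dec_enc (β : NN) : dec (enc β) = β := by
  funext k
  cases k with
  | zero => simp [dec, pos_enc, tpos]
  | succ k =>
      have h1 := pos_enc β (k+1)
      have h2 := pos_enc β k
      have h3 := tpos_succ β k
      simp only [dec, h1, h2]
      omega

lemma pos_mem {b : K} (hb : b ∈ I) (k : ℕ) : b (pos b k) = true :=
  Nat.nth_mem_of_infinite hb k

lemma pos_mono {b : K} (hb : b ∈ I) : StrictMono (pos b) :=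
  fun _ _ h => (Nat.nth_lt_nth hb).2 h

lemma pos_congr {b c : K} (hb : b ∈ I) (hc : c ∈ I) {k : ℕ}
    (h : ∀ i ≤ pos b k, c i = b i) : ∀ j ≤ k, pos c j = pos b j := by
  intro j hj
  have hmb : pos b j ≤ pos b k := ((pos_mono hb).le_iff_le).2 hj
  have hpc : c (pos b j) = true := by rw [h _ hmb]; exact pos_mem hb j
  have hcount : Nat.count (fun n => c n = true) (pos b j) =
      Nat.count (fun n => b n = true) (pos b j) :=
    count_congr (fun i hi => by rw [h i (le_of_lt (lt_of_lt_of_le hi hmb))])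
  have hcb : Nat.count (fun n => b n = true) (pos b j) = j :=
    Nat.count_nth_of_infinite hb j
  have := Nat.nth_count (p := fun n => c n = true) hpc
  rw [hcount, hcb] at this
  exact this

lemma dec_congr {b c : K} (hb : b ∈ I) (hc : c ∈ I) {n : ℕ}
    (h : ∀ i ≤ pos b n, c i = b i) : ∀ k < n, dec c k = dec b k := by
  intro k hk
  have hp := pos_congr hb hc h
  cases k with
  | zero => simp [dec, hp 0 (Nat.zero_le n)]
  | succ k => simp [dec, hp (k+1) (by omega), hp k (by omega)]

lemma isGδ_I : IsGδ I := by
  have hI : I = ⋂ n : ℕ, ⋃ m : ℕ, ⋃ _ : n ≤ m, {b : K | b m = true} := by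
    ext b
    simp only [mem_iInter, mem_iUnion, mem_setOf_eq, I]
    constructor
    · intro hb n
      by_contra hcon
      push_neg at hcon
      apply hb
      apply Set.Finite.subset (Set.finite_Iio n)
      intro m hm
      simp only [mem_setOf_eq] at hm
      by_contra hmn
      exact absurd hm (hcon m (by simpa [Set.mem_Iio] using hmn))
    · intro h
      intro hfin
      obtain ⟨x, hx⟩ := hfin.bddAbove
      obtain ⟨m, hm, hbm⟩ := h (x+1)
      have := hx (show m ∈ {n | b n = true} from hbm)
      omega
  rw [hI]
  refine IsGδ.iInter fun n => IsOpen.isGδ ?_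
  refine isOpen_iUnion fun m => isOpen_iUnion fun _ => ?_
  have : IsOpen ((fun b : K => b m) ⁻¹' {x | x = true}) :=
    IsOpen.preimage (continuous_apply m) (isOpen_discrete _)
  exact this


/-! ### The universal set and its Gδ realization -/

def codeN (x : K) (β : NN) (n : ℕ) : ℕ :=
  Encodable.encode (List.ofFn fun k : Fin n => (x k, β k))

lemma codeN_inj {x x' : K} {β β' : NN} {n n' : ℕ} (h : codeN x β n = codeN x' β' n') :
    n = n' ∧ (∀ k < n, x k = x' k) ∧ (∀ k < n, β k = β' k) := by
  have hl := Encodable.encode_injective h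
  have hlen : n = n' := by
    have := congrArg List.length hl
    simpa using this
  subst hlen
  rw [List.ofFn_inj] at hl
  refine ⟨rfl, fun k hk => ?_, fun k hk => ?_⟩
  · have := congrFun hl ⟨k, hk⟩
    exact (Prod.ext_iff.1 this).1
  · have := congrFun hl ⟨k, hk⟩
    exact (Prod.ext_iff.1 this).2

def U : Set (K × K) := {z | ∃ β : NN, ∀ n, z.1 (codeN z.2 β n) = true}

def V : Set (K × (K × K)) :=
  {w | w.1 ∈ I ∧ ∀ n, w.2.1 (codeN w.2.2 (dec w.1) n) = true}

lemma mem_U_iff (z : K × K) : z ∈ U ↔ ∃ b : K, (b, z) ∈ V := by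
  constructor
  · rintro ⟨β, hβ⟩
    refine ⟨enc β, enc_mem_I β, ?_⟩
    simpa [dec_enc] using hβ
  · rintro ⟨b, _, hb⟩
    exact ⟨dec b, hb⟩

lemma isGδ_preimage {X Y : Type*} [TopologicalSpace X] [TopologicalSpace Y]
    {f : X → Y} (hf : Continuous f) {s : Set Y} (hs : IsGδ s) : IsGδ (f ⁻¹' s) := by
  obtain ⟨g, hg, rfl⟩ := isGδ_iff_eq_iInter_nat.1 hs
  rw [Set.preimage_iInter]
  exact IsGδ.iInter fun n => ((hg n).preimage hf).isGδ

lemma isGδ_V : IsGδ V := by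
  have hV : V = ⋂ n : ℕ,
      ({w : K × (K × K) | w.1 ∈ I} ∩ {w | w.2.1 (codeN w.2.2 (dec w.1) n) = true}) := by
    ext w
    simp only [V, mem_setOf_eq, mem_iInter, mem_inter_iff]
    exact ⟨fun ⟨h1, h2⟩ n => ⟨h1, h2 n⟩, fun h => ⟨(h 0).1, fun n => (h n).2⟩⟩
  rw [hV]
  have hII : IsGδ {w : K × (K × K) | w.1 ∈ I} := isGδ_preimage continuous_fst isGδ_I
  refine IsGδ.iInter fun n => ?_
  -- the open "box" neighborhood witnessing local determination
  set box : (K × (K × K)) → Set (K × (K × K)) := fun w =>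
    {v | (∀ i ≤ pos w.1 n, v.1 i = w.1 i) ∧
      v.2.1 (codeN w.2.2 (dec w.1) n) = true ∧ ∀ k < n, v.2.2 k = w.2.2 k} with hbox
  have hbox_open : ∀ w, IsOpen (box w) := by
    intro w
    have h1 : IsOpen {v : K × (K × K) | ∀ i ≤ pos w.1 n, v.1 i = w.1 i} := by
      have : {v : K × (K × K) | ∀ i ≤ pos w.1 n, v.1 i = w.1 i} =
          ⋂ i ∈ Set.Iic (pos w.1 n), {v : K × (K × K) | v.1 i = w.1 i} := by
        ext v; simp [Set.mem_Iic]
      rw [this]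
      refine (Set.finite_Iic _).isOpen_biInter fun i _ => ?_
      have : IsOpen ((fun v : K × (K × K) => v.1 i) ⁻¹' {x | x = w.1 i}) :=
        IsOpen.preimage ((continuous_apply i).comp continuous_fst) (isOpen_discrete _)
      exact this
    have h2 : IsOpen {v : K × (K × K) | v.2.1 (codeN w.2.2 (dec w.1) n) = true} := by
      have : IsOpen ((fun v : K × (K × K) => v.2.1 (codeN w.2.2 (dec w.1) n)) ⁻¹'
          {x | x = true}) :=
        IsOpen.preimage ((continuous_apply _).comp (continuous_fst.comp continuous_snd))
          (isOpen_discrete _)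
      exact this
    have h3 : IsOpen {v : K × (K × K) | ∀ k < n, v.2.2 k = w.2.2 k} := by
      have : {v : K × (K × K) | ∀ k < n, v.2.2 k = w.2.2 k} =
          ⋂ k ∈ Set.Iio n, {v : K × (K × K) | v.2.2 k = w.2.2 k} := by
        ext v; simp [Set.mem_Iio]
      rw [this]
      refine (Set.finite_Iio _).isOpen_biInter fun k _ => ?_
      have : IsOpen ((fun v : K × (K × K) => v.2.2 k) ⁻¹' {x | x = w.2.2 k}) :=
        IsOpen.preimage ((continuous_apply k).comp (continuous_snd.comp continuous_snd))
          (isOpen_discrete _)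
      exact this
    have : box w = {v : K × (K × K) | ∀ i ≤ pos w.1 n, v.1 i = w.1 i} ∩
        ({v | v.2.1 (codeN w.2.2 (dec w.1) n) = true} ∩
         {v | ∀ k < n, v.2.2 k = w.2.2 k}) := by
      ext v; simp [hbox, and_assoc]
    rw [this]
    exact h1.inter (h2.inter h3)
  set O : Set (K × (K × K)) :=
    ⋃ w ∈ ({w : K × (K × K) | w.1 ∈ I} ∩
      {w | w.2.1 (codeN w.2.2 (dec w.1) n) = true}), box w with hO
  have hOopen : IsOpen O := isOpen_biUnion fun w _ => hbox_open w
  have hkey : {w : K × (K × K) | w.1 ∈ I} ∩ {w | w.2.1 (codeN w.2.2 (dec w.1) n) = true} =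
      {w : K × (K × K) | w.1 ∈ I} ∩ O := by
    apply Set.Subset.antisymm
    · intro w hw
      refine ⟨hw.1, Set.mem_biUnion hw ?_⟩
      exact ⟨fun i _ => rfl, hw.2, fun k _ => rfl⟩
    · intro v hv
      obtain ⟨hvI, hvO⟩ := hv
      refine ⟨hvI, ?_⟩
      obtain ⟨w, hw, hv⟩ := Set.mem_iUnion₂.1 hvO
      obtain ⟨hb1, hb2, hb3⟩ := hv
      have hdec : ∀ k < n, dec v.1 k = dec w.1 k := dec_congr hw.1 hvI hb1
      have hcode : codeN v.2.2 (dec v.1) n = codeN w.2.2 (dec w.1) n := by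
        unfold codeN
        exact congrArg Encodable.encode (congrArg List.ofFn (funext fun k =>
          by rw [hdec k k.isLt, hb3 k k.isLt]))
      simpa [mem_setOf_eq, hcode] using hb2
  rw [hkey]
  exact hII.inter hOopen.isGδ


/-! ### Embedding Cantor-type spaces into ℝ -/

lemma exists_emb : ∃ f : K → ℝ, Continuous f ∧ Injective f := by
  have hperf : Perfect (Set.univ : Set ℝ) := by
    refine ⟨isClosed_univ, ?_⟩
    intro x _
    rw [accPt_iff_nhds]
    intro Unb hU
    have h1 : Unb ∩ {x}ᶜ ∈ 𝓝[≠] x :=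
      Filter.inter_mem (mem_nhdsWithin_of_mem_nhds hU) self_mem_nhdsWithin
    obtain ⟨y, hy1, hy2⟩ := Filter.nonempty_of_mem h1
    exact ⟨y, ⟨hy1, trivial⟩, hy2⟩
  obtain ⟨f, _, hc, hi⟩ := hperf.exists_nat_bool_injection ⟨0, trivial⟩
  exact ⟨f, hc, hi⟩

def J (z : K × K) : K := fun n => if n % 2 = 0 then z.1 (n / 2) else z.2 (n / 2)

lemma J_cont : Continuous J := by
  refine continuous_pi fun n => ?_
  unfold J
  split
  · exact (continuous_apply _).comp continuous_fst
  · exact (continuous_apply _).comp continuous_snd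

lemma J_inj : Injective J := by
  intro a b h
  have h1 : ∀ k, a.1 k = b.1 k := by
    intro k
    have := congrFun h (2 * k)
    simpa [J, Nat.mul_div_cancel_left, Nat.mul_mod_right] using this
  have h2 : ∀ k, a.2 k = b.2 k := by
    intro k
    have := congrFun h (2 * k + 1)
    have hmod : (2 * k + 1) % 2 = 1 := by omega
    have hdiv : (2 * k + 1) / 2 = k := by omega
    simpa [J, hmod, hdiv] using this
  exact Prod.ext (funext h1) (funext h2)

lemma isGδ_image {X : Type*} [TopologicalSpace X] {Y : Type*} [MetricSpace Y]
    {f : X → Y} (hf : IsClosedEmbedding f) {s : Set X} (hs : IsGδ s) :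
    IsGδ (f '' s) := by
  obtain ⟨g, hg, rfl⟩ := isGδ_iff_eq_iInter_nat.1 hs
  rw [(hf.injective.injOn).image_iInter_eq]
  refine IsGδ.iInter fun n => ?_
  obtain ⟨O, hO, hpre⟩ := hf.toIsEmbedding.toIsInducing.isOpen_iff.1 (hg n)
  rw [← hpre, Set.image_preimage_eq_inter_range]
  exact hO.isGδ.inter hf.isClosed_range.isGδ

section Main

variable (f0 : K → ℝ) (hc0 : Continuous f0) (hi0 : Injective f0)

noncomputable def Φ : K × (K × K) → ℝ × ℝ := fun w => (Real.exp (f0 w.1), f0 (J w.2))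

lemma Φ_closedEmbedding (hc0 : Continuous f0) (hi0 : Injective f0) :
    IsClosedEmbedding (Φ f0) := by
  refine Continuous.isClosedEmbedding ?_ ?_
  · exact (Real.continuous_exp.comp (hc0.comp continuous_fst)).prodMk
      (hc0.comp (J_cont.comp continuous_snd))
  · intro w v h
    rw [Prod.ext_iff] at h
    obtain ⟨h1, h2⟩ := h
    have hb1 : w.1 = v.1 := hi0 (Real.exp_injective h1)
    have hb2 : w.2 = v.2 := J_inj (hi0 h2)
    exact Prod.ext hb1 hb2

def Cset : Set (ℝ × ℝ) := Φ f0 '' V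

lemma isGδ_Cset (hc0 : Continuous f0) (hi0 : Injective f0) : IsGδ (Cset f0) :=
  isGδ_image (Φ_closedEmbedding f0 hc0 hi0) isGδ_V

lemma Cset_pos {t y : ℝ} (h : (t, y) ∈ Cset f0) : 0 < t := by
  obtain ⟨w, _, hw⟩ := h
  have := congrArg Prod.fst hw
  simp only [Φ] at this
  rw [← this]
  exact Real.exp_pos _

lemma Cset_section (hi0 : Injective f0) (z : K × K) :
    (∃ t : ℝ, (t, f0 (J z)) ∈ Cset f0) ↔ z ∈ U := by
  rw [mem_U_iff]
  constructor
  · rintro ⟨t, w, hwV, hw⟩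
    rw [Prod.ext_iff] at hw
    obtain ⟨_, h2⟩ := hw
    have : w.2 = z := J_inj (hi0 h2)
    rw [← this]
    exact ⟨w.1, by rwa [← Prod.mk.eta (p := w)] at hwV⟩
  · rintro ⟨b, hb⟩
    exact ⟨Real.exp (f0 b), ⟨(b, z), hb, rfl⟩⟩

end Main


/-! ### The universal set is not Borel -/

lemma not_measurableSet_U : ¬ MeasurableSet U := by
  intro hU
  classical
  -- the diagonal set
  set D : Set K := {α | (α, α) ∉ U} with hD
  have hDm : MeasurableSet D := by
    have hdiag : Measurable (fun α : K => (α, α)) :=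
      (continuous_id.prodMk continuous_id).measurable
    exact hdiag hU.compl
  haveI : PolishSpace K := by
    haveI : TopologicalSpace.IsCompletelyMetrizableSpace (ℕ → Bool) := inferInstance
    infer_instance
  have hDa : AnalyticSet D := hDm.analyticSet
  rw [AnalyticSet] at hDa
  rcases hDa with hDe | ⟨f, hfc, hfr⟩
  · -- D empty : the constant-false α is in U paired with itself, contradiction
    have h0 : ((fun _ => false : K), (fun _ => false : K)) ∉ U := by
      rintro ⟨β, hβ⟩
      simpa using hβ 0
    have : (fun _ => false : K) ∈ D := h0
    rw [hDe] at this
    exact this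
  · -- D = range f ; build the universal code A for range f
    set A : K := fun m => if ∃ (β : NN) (n : ℕ), m = codeN (f β) β n then true else false
      with hA
    have key : ∀ x : K, (A, x) ∈ U ↔ x ∈ range f := by
      intro x
      constructor
      · rintro ⟨β, hβ⟩
        have hn : ∀ n : ℕ, ∃ (β' : NN) (n' : ℕ), codeN x β n = codeN (f β') β' n' := by
          intro n
          have := hβ n
          simp only [hA] at this
          by_contra hcon
          rw [if_neg hcon] at this
          exact Bool.false_ne_true this
        choose βs ns hcode using hn
        have hprop : ∀ n, n = ns n ∧ (∀ k < n, x k = f (βs n) k) ∧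
            (∀ k < n, β k = βs n k) := fun n => codeN_inj (hcode n)
        have hβs : Tendsto βs atTop (𝓝 β) := by
          rw [tendsto_pi_nhds]
          intro i
          refine tendsto_const_nhds.congr' ?_
          filter_upwards [Filter.eventually_ge_atTop (i + 1)] with n hn
          exact (hprop n).2.2 i (by omega)
        have h1 : Tendsto (fun n => f (βs n)) atTop (𝓝 (f β)) :=
          (hfc.tendsto β).comp hβs
        have h2 : Tendsto (fun n => f (βs n)) atTop (𝓝 x) := by
          rw [tendsto_pi_nhds]
          intro i
          refine tendsto_const_nhds.congr' ?_
          filter_upwards [Filter.eventually_ge_atTop (i + 1)] with n hn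
          exact (hprop n).2.1 i (by omega)
        have : f β = x := tendsto_nhds_unique h1 h2
        exact ⟨β, this⟩
      · rintro ⟨β, rfl⟩
        refine ⟨β, fun n => ?_⟩
        simp only [hA]
        rw [if_pos ⟨β, n, rfl⟩]
    by_cases hAD : A ∈ D
    · have hU2 : (A, A) ∈ U := (key A).2 (hfr ▸ hAD)
      exact hAD hU2
    · have hU2 : (A, A) ∈ U := by
        by_contra hcon
        exact hAD hcon
      have : A ∈ D := hfr ▸ ((key A).1 hU2)
      exact hAD this

end Stmt14

/-- There is a Gδ set `C ⊆ ℝ × ℝ` such that, for the payoff function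
`π = 𝟙_C` (the indicator of `C`, a bounded Borel function of Baire class two), the best
response relation `E^π = {(s, μ) ∈ ℝ × Δ(ℝ) : ∫ π(s,y) dμ ≥ ∫ π(t,y) dμ for all t ∈ ℝ}` is
not a Borel subset of `ℝ × Δ(ℝ)` (for the Borel σ-algebra of the product of the topology of
`ℝ` with the topology of weak convergence on `Δ(ℝ)`). -/
theorem stmt_14 :
    ∃ C : Set (ℝ × ℝ), IsGδ C ∧
      ¬ MeasurableSet[borel (ℝ × ProbabilityMeasure ℝ)]
        {p : ℝ × ProbabilityMeasure ℝ | ∀ t : ℝ,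
          ∫ y, Set.indicator C (fun _ => (1 : ℝ)) (p.1, y) ∂(p.2 : Measure ℝ) ≥
          ∫ y, Set.indicator C (fun _ => (1 : ℝ)) (t, y) ∂(p.2 : Measure ℝ)} := by
  obtain ⟨f0, hc0, hi0⟩ := Stmt14.exists_emb
  refine ⟨Stmt14.Cset f0, Stmt14.isGδ_Cset f0 hc0 hi0, ?_⟩
  intro hS
  letI mZ : MeasurableSpace (ℝ × ProbabilityMeasure ℝ) := borel _
  haveI : BorelSpace (ℝ × ProbabilityMeasure ℝ) := ⟨rfl⟩
  set C := Stmt14.Cset f0 with hC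
  set S : Set (ℝ × ProbabilityMeasure ℝ) := {p : ℝ × ProbabilityMeasure ℝ | ∀ t : ℝ,
      ∫ y, Set.indicator C (fun _ => (1 : ℝ)) (p.1, y) ∂(p.2 : Measure ℝ) ≥
      ∫ y, Set.indicator C (fun _ => (1 : ℝ)) (t, y) ∂(p.2 : Measure ℝ)} with hSdef
  set g : Stmt14.K × Stmt14.K → ℝ × ProbabilityMeasure ℝ :=
    fun z => ((0 : ℝ), diracProba (f0 (Stmt14.J z))) with hgdef
  have hg : Continuous g :=
    continuous_const.prodMk (continuous_diracProba.comp (hc0.comp Stmt14.J_cont))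
  have hgm : Measurable g := hg.measurable
  have hpre : MeasurableSet (g ⁻¹' S) := hgm hS
  have heq : g ⁻¹' S = Stmt14.Uᶜ := by
    ext z
    set w := f0 (Stmt14.J z) with hw
    have hcoe : ((diracProba w : ProbabilityMeasure ℝ) : Measure ℝ) = Measure.dirac w := rfl
    simp only [Set.mem_preimage, hSdef, Set.mem_setOf_eq, hgdef, hcoe, Set.mem_compl_iff]
    simp only [← hw, hcoe, MeasureTheory.integral_dirac]
    have hzero : Set.indicator C (fun _ => (1 : ℝ)) (0, w) = 0 := by
      apply Set.indicator_of_notMem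
      intro hmem
      exact absurd (Stmt14.Cset_pos f0 hmem) (lt_irrefl 0)
    constructor
    · intro h hzU
      obtain ⟨t, ht⟩ := (Stmt14.Cset_section f0 hi0 z).2 hzU
      have h1 : Set.indicator C (fun _ => (1 : ℝ)) (t, w) = 1 := Set.indicator_of_mem ht _
      have := h t
      rw [hzero, h1] at this
      linarith
    · intro hzU t
      rw [hzero]
      have hnm : (t, w) ∉ C := by
        intro hmem
        exact hzU ((Stmt14.Cset_section f0 hi0 z).1 ⟨t, hmem⟩)
      rw [Set.indicator_of_notMem hnm]
  rw [heq] at hpre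
  exact Stmt14.not_measurableSet_U hpre.of_compl
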